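/- If A is an arithmetic progression of k integers with nonzero common difference and 1 ≤ h ≤ k, then |ĥA| = hk - h² + 1. -/

import Mathlib

open Pointwise Finset

-- lower bound: any n-element finset of naturals has sum ≥ ∑ range n
lemma aux_sum_range_le : ∀ (n : ℕ) (S : Finset ℕ), S.card = n →
    ∑ i ∈ range n, i ≤ ∑ i ∈ S, i := by
  intro n
  induction n with
  | zero => simp
  | succ n ih =>
    intro S hS
    have hne : S.Nonempty := by rw [← card_pos, hS]; omega
    set M := S.max' hne with hMdef
    have hMmem := S.max'_mem hne
    have hsub : S ⊆ range (M+1) := fun x hx => mem_range.2 (Nat.lt_succ_of_le (le_max' S x hx))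
    have hcard : n + 1 ≤ M + 1 := by
      have := card_le_card hsub
      rw [hS, card_range] at this; exact this
    have h2 := ih (S.erase M) (by rw [card_erase_of_mem hMmem, hS]; omega)
    have h3 : M + ∑ i ∈ S.erase M, i = ∑ i ∈ S, i := Finset.add_sum_erase S id hMmem
    rw [Finset.sum_range_succ]
    omega

-- sum of the top interval
lemma aux_top_sum (h k : ℕ) (hhk : h ≤ k) :
    ∑ i ∈ Ico (k - h) k, i = ∑ i ∈ range h, i + h * (k - h) := by
  rw [Finset.sum_Ico_eq_sum_range]
  have : k - (k - h) = h := by omega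
  rw [this, Finset.sum_add_distrib, Finset.sum_const, card_range, smul_eq_mul]
  ring

lemma aux_split (h k : ℕ) (hhk : h ≤ k) :
    ∑ i ∈ range (k - h), i + ∑ i ∈ Ico (k - h) k, i = ∑ i ∈ range k, i := by
  rw [Finset.range_eq_Ico, Finset.range_eq_Ico]
  exact Finset.sum_Ico_consecutive (fun i : ℕ => i) (Nat.zero_le _) (Nat.sub_le k h)

-- a finset closed under +1 (within range k) is a top interval
lemma aux_closed (k : ℕ) (S : Finset ℕ) (hS : S ⊆ range k) (hne : S.Nonempty)
    (hcl : ∀ i ∈ S, i + 1 < k → i + 1 ∈ S) : S = Ico (S.min' hne) k := by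
  have key : ∀ t, S.min' hne ≤ t → t < k → t ∈ S := by
    intro t ht
    induction t, ht using Nat.le_induction with
    | base => intro _; exact S.min'_mem hne
    | succ n hn ih => intro hnk; exact hcl n (ih (by omega)) hnk
  apply Finset.Subset.antisymm
  · intro x hx; rw [mem_Ico]; exact ⟨min'_le S x hx, mem_range.1 (hS hx)⟩
  · intro t ht; rw [mem_Ico] at ht; exact key t ht.1 ht.2

-- surjectivity
lemma aux_exists (h k : ℕ) (hh : 1 ≤ h) (hhk : h ≤ k) :
    ∀ r, r ≤ h * (k - h) → ∃ S : Finset ℕ, S ⊆ range k ∧ S.card = h ∧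
      ∑ i ∈ S, i = ∑ i ∈ range h, i + r := by
  intro r
  induction r with
  | zero =>
    exact fun _ => ⟨range h, fun x hx => mem_range.2 (lt_of_lt_of_le (mem_range.1 hx) hhk),
      card_range h, by omega⟩
  | succ r ih =>
    intro hr
    obtain ⟨S, hS, hc, hsum⟩ := ih (by omega)
    by_cases hex : ∃ i ∈ S, i + 1 < k ∧ i + 1 ∉ S
    · obtain ⟨i, hi, hik, hi1⟩ := hex
      have hnotmem : i + 1 ∉ S.erase i := fun hmem => hi1 (Finset.mem_of_mem_erase hmem)
      refine ⟨insert (i+1) (S.erase i), ?_, ?_, ?_⟩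
      · intro x hx
        rcases Finset.mem_insert.1 hx with rfl | hx
        · exact mem_range.2 hik
        · exact hS (Finset.mem_of_mem_erase hx)
      · rw [Finset.card_insert_of_notMem hnotmem, card_erase_of_mem hi, hc]
        omega
      · rw [Finset.sum_insert hnotmem]
        have h3 : i + ∑ j ∈ S.erase i, j = ∑ j ∈ S, j := Finset.add_sum_erase S id hi
        omega
    · exfalso
      push_neg at hex
      have hne : S.Nonempty := by rw [← card_pos, hc]; omega
      have heq := aux_closed k S hS hne (fun i hi hik => hex i hi hik)
      have hm : S.min' hne = k - h := by
        have := heq ▸ hc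
        rw [Nat.card_Ico] at this
        have hle : S.min' hne < k := mem_range.1 (hS (S.min'_mem hne))
        omega
      rw [heq, hm, aux_top_sum h k hhk] at hsum
      omega

-- the set of h-subset sums of range k equals an interval
lemma aux_image_eq (h k : ℕ) (hh : 1 ≤ h) (hhk : h ≤ k) :
    ((range k).powersetCard h).image (fun S => ∑ i ∈ S, i)
      = Icc (∑ i ∈ range h, i) (∑ i ∈ range h, i + h * (k - h)) := by
  ext m
  simp only [mem_image, mem_powersetCard, mem_Icc]
  constructor
  · rintro ⟨S, ⟨hsub, hcard⟩, rfl⟩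
    refine ⟨aux_sum_range_le h S hcard, ?_⟩
    have h1 : ∑ i ∈ range k \ S, i + ∑ i ∈ S, i = ∑ i ∈ range k, i := Finset.sum_sdiff hsub
    have h2 : (range k \ S).card = k - h := by rw [card_sdiff_of_subset hsub, card_range, hcard]
    have h3 := aux_sum_range_le (k - h) _ h2
    have h4 := aux_split h k hhk
    have h5 := aux_top_sum h k hhk
    omega
  · rintro ⟨h1, h2⟩
    obtain ⟨S, hsub, hcard, hsum⟩ := aux_exists h k hh hhk (m - ∑ i ∈ range h, i) (by omega)
    exact ⟨S, ⟨hsub, hcard⟩, by omega⟩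

/-- The `h`-fold sumset of a finite set `A`. -/
def hfold {G : Type*} [AddCommMonoid G] [DecidableEq G] : ℕ → Finset G → Finset G
  | 0, _ => {0}
  | n + 1, A => hfold n A + A

/-- The `h`-fold restricted sumset of a finite set `A`: sums of `h` distinct elements. -/
def rfold {G : Type*} [AddCommMonoid G] [DecidableEq G] (h : ℕ) (A : Finset G) : Finset G :=
  (A.powersetCard h).image (fun S => S.sum id)

theorem stmt8 (h k : ℕ) (hh : 1 ≤ h) (hhk : h ≤ k) (a d : ℤ) (hd : d ≠ 0) :
    (rfold h ((Finset.range k).image (fun i : ℕ => a + (i : ℤ) * d))).card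
      = h * k - h ^ 2 + 1 := by
  set f : ℕ → ℤ := fun i : ℕ => a + (i : ℤ) * d with hf
  have finj : Function.Injective f := by
    intro x y hxy
    simp only [hf] at hxy
    have : (x : ℤ) * d = y * d := by linarith
    exact_mod_cast mul_right_cancel₀ hd this
  have himg : (Finset.range k).image f = (Finset.range k).map ⟨f, finj⟩ :=
    by rw [Finset.map_eq_image]; rfl
  rw [rfold, himg, Finset.powersetCard_map, Finset.map_eq_image, Finset.image_image]
  have hcongr : ∀ T ∈ (range k).powersetCard h,
      ((fun S : Finset ℤ => S.sum id) ∘ (Finset.mapEmbedding ⟨f, finj⟩).toEmbedding) T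
        = (h : ℤ) * a + ((∑ i ∈ T, i : ℕ) : ℤ) * d := by
    intro T hT
    obtain ⟨hTsub, hTcard⟩ := Finset.mem_powersetCard.1 hT
    simp only [Function.comp_apply]
    show (Finset.map ⟨f, finj⟩ T).sum id = _
    rw [Finset.sum_map]
    simp only [Function.Embedding.coeFn_mk, hf, id]
    rw [Finset.sum_add_distrib, Finset.sum_const, hTcard, ← Finset.sum_mul]
    push_cast
    ring
  rw [Finset.image_congr hcongr]
  have : ((range k).powersetCard h).image
        (fun T => (h : ℤ) * a + ((∑ i ∈ T, i : ℕ) : ℤ) * d)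
      = (((range k).powersetCard h).image (fun S => ∑ i ∈ S, i)).image
        (fun m : ℕ => (h : ℤ) * a + (m : ℤ) * d) := by
    rw [Finset.image_image]
    rfl
  rw [this, aux_image_eq h k hh hhk, Finset.card_image_of_injective]
  · rw [Nat.card_Icc]
    have hmm : h * (k - h) + h * h = h * k := by rw [← Nat.mul_add]; congr 1; omega
    have : h ^ 2 = h * h := sq h
    omega
  · intro x y hxy
    simp only at hxy
    have : (x : ℤ) * d = y * d := by linarith
    exact_mod_cast mul_right_cancel₀ hd this
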